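/- Under the gCANS stationarity condition, any critical point s of γ satisfies s_j/s_k = σ_j/σ_k for all j, k with σ_k > 0. -/

import Mathlib

open Real
open scoped BigOperators

/-- **Critical points of the gain-per-shot allocate shots proportionally to the σᵢ.**
At any positive critical point `s` of
`γ(s) = [(α − Lα²/2)G − (Lα²/2) Σₖ σₖ²/sₖ] / (Σₖ sₖ)` we have `sⱼ/sₖ = σⱼ/σₖ`. -/
theorem gcans_critical_point_proportional
    (d : ℕ) (α L G : ℝ) (hα : 0 < α) (hL : 0 < L) (hLα : L * α < 2) (hG : 0 < G)
    (σ : Fin d → ℝ) (hσ : ∀ i, 0 < σ i)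
    (γ : (Fin d → ℝ) → ℝ)
    (hγ : γ = fun s => ((α - L * α ^ 2 / 2) * G
        - L * α ^ 2 / 2 * ∑ k, σ k ^ 2 / s k) / ∑ k, s k)
    (s : Fin d → ℝ) (hs : ∀ i, 0 < s i)
    (hcrit : fderiv ℝ γ s = 0) :
    ∀ j k, σ k > 0 → s j / s k = σ j / σ k := by
  intro j k hσk
  have : Nonempty (Fin d) := ⟨j⟩
  set c : ℝ := L * α ^ 2 / 2 with hc
  have hc0 : 0 < c := by positivity
  set C : ℝ := (α - c) * G with hC
  set T : ℝ := ∑ m, s m with hT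
  set N : ℝ := C - c * ∑ m, σ m ^ 2 / s m with hN
  have hT0 : 0 < T := Finset.sum_pos (fun m _ => hs m) Finset.univ_nonempty
  -- differentiability of γ at s
  have happ : ∀ m : Fin d, DifferentiableAt ℝ (fun x : Fin d → ℝ => x m) s :=
    fun m => (hasFDerivAt_apply (𝕜 := ℝ) m s).differentiableAt
  have hdiffγ : DifferentiableAt ℝ γ s := by
    rw [hγ]
    simp only [div_eq_mul_inv]
    have h1 : DifferentiableAt ℝ
        (fun x : Fin d → ℝ => C - c * ∑ m, σ m ^ 2 * (x m)⁻¹) s := by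
      apply DifferentiableAt.sub (differentiableAt_const _)
      apply DifferentiableAt.const_mul
      apply DifferentiableAt.fun_sum
      intro m _
      exact (differentiableAt_const _).mul ((happ m).inv (hs m).ne')
    have h2 : DifferentiableAt ℝ (fun x : Fin d → ℝ => (∑ m, x m)⁻¹) s :=
      (DifferentiableAt.fun_sum fun m _ => happ m).inv hT0.ne'
    exact h1.mul h2
  -- key: for each i, c * σ i ^ 2 * T = N * s i ^ 2
  have key : ∀ i : Fin d, c * σ i ^ 2 * T = N * s i ^ 2 := by
    intro i
    have hcurve : HasDerivAt (fun t : ℝ => Function.update s i t)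
        (Pi.single i 1) (s i) := by
      have h1 : HasDerivAt (fun t : ℝ => s + (t - s i) • (Pi.single i 1 : Fin d → ℝ))
          ((1 : ℝ) • (Pi.single i 1 : Fin d → ℝ)) (s i) :=
        (((hasDerivAt_id (s i)).sub_const (s i)).smul_const _).const_add s
      have h2 : (fun t : ℝ => Function.update s i t)
          = fun t : ℝ => s + (t - s i) • (Pi.single i 1 : Fin d → ℝ) := by
        funext t
        funext m
        by_cases hm : m = i
        · subst hm; simp [Function.update]
        · simp [Function.update, hm, Pi.single_eq_of_ne hm]
      rw [h2]
      simpa using h1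
    have hγs : HasFDerivAt γ (fderiv ℝ γ s) (Function.update s i (s i)) := by
      rw [Function.update_eq_self]; exact hdiffγ.hasFDerivAt
    have hchain : HasDerivAt (fun t : ℝ => γ (Function.update s i t))
        ((fderiv ℝ γ s) (Pi.single i 1)) (s i) :=
      hγs.comp_hasDerivAt (s i) hcurve
    have hzero : HasDerivAt (fun t : ℝ => γ (Function.update s i t)) 0 (s i) := by
      rw [hcrit] at hchain; simpa using hchain
    set A : ℝ := ∑ m ∈ Finset.univ.erase i, σ m ^ 2 / s m with hA
    set B : ℝ := ∑ m ∈ Finset.univ.erase i, s m with hB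
    have hform : (fun t : ℝ => γ (Function.update s i t))
        = fun t : ℝ => (C - c * (σ i ^ 2 / t + A)) / (t + B) := by
      funext t
      rw [hγ]
      simp only
      congr 1
      · congr 2
        rw [← Finset.add_sum_erase _ _ (Finset.mem_univ i)]
        congr 1
        · simp [Function.update]
        · exact Finset.sum_congr rfl fun m hm =>
            by rw [Function.update_of_ne (Finset.ne_of_mem_erase hm)]
      · rw [← Finset.add_sum_erase _ _ (Finset.mem_univ i)]
        congr 1
        · simp [Function.update]
        · exact Finset.sum_congr rfl fun m hm =>
            by rw [Function.update_of_ne (Finset.ne_of_mem_erase hm)]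
    have hnum : HasDerivAt (fun t : ℝ => C - c * (σ i ^ 2 / t + A))
        (c * σ i ^ 2 / s i ^ 2) (s i) := by
      have h1 : HasDerivAt (fun t : ℝ => σ i ^ 2 / t + A)
          (σ i ^ 2 * (-(s i ^ 2)⁻¹)) (s i) := by
        simpa [div_eq_mul_inv] using
          (((hasDerivAt_inv (hs i).ne').const_mul (σ i ^ 2)).add_const A)
      have h2 := (h1.const_mul c).const_sub C
      convert h2 using 1
      · rfl
      show c * σ i ^ 2 / s i ^ 2 = -(c * (σ i ^ 2 * -(s i ^ 2)⁻¹))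
      ring
      rfl
    have hden : HasDerivAt (fun t : ℝ => t + B) 1 (s i) :=
      (hasDerivAt_id (s i)).add_const B
    have hB0 : 0 ≤ B := Finset.sum_nonneg fun m _ => (hs m).le
    have hdenne : s i + B ≠ 0 := by
      have : 0 < s i + B := by linarith [hs i]
      exact this.ne'
    have hdiv := hnum.fun_div hden hdenne
    rw [← hform] at hdiv
    have heq := hzero.unique hdiv
    have hTB : s i + B = T := by
      rw [hT, hB, ← Finset.add_sum_erase _ _ (Finset.mem_univ i)]
    have hNA : C - c * (σ i ^ 2 / s i + A) = N := by
      rw [hN, hA, ← Finset.add_sum_erase _ _ (Finset.mem_univ i)]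
    rw [hTB, hNA] at heq
    have hsi2 : (s i : ℝ) ^ 2 ≠ 0 := pow_ne_zero _ (hs i).ne'
    have hT2 : (T : ℝ) ^ 2 ≠ 0 := pow_ne_zero _ hT0.ne'
    field_simp [hsi2, hT2] at heq
    rw [zero_mul, eq_comm, sub_eq_zero, div_eq_iff hsi2] at heq
    linarith
  -- conclude proportionality
  have hj := key j
  have hk := key k
  have hcT : (0:ℝ) < c * T := mul_pos hc0 hT0
  have hsq : σ j ^ 2 * s k ^ 2 = σ k ^ 2 * s j ^ 2 := by
    have h3 : c * T * (σ j ^ 2 * s k ^ 2) = c * T * (σ k ^ 2 * s j ^ 2) := by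
      linear_combination s k ^ 2 * hj - s j ^ 2 * hk
    exact mul_left_cancel₀ hcT.ne' h3
  have hjk : σ j * s k = σ k * s j := by
    have h4 : (σ j * s k - σ k * s j) * (σ j * s k + σ k * s j) = 0 := by
      linear_combination hsq
    rcases mul_eq_zero.mp h4 with h | h
    · linarith
    · exfalso
      have := mul_pos (hσ j) (hs k)
      have := mul_pos (hσ k) (hs j)
      linarith
  rw [div_eq_div_iff (hs k).ne' hσk.ne']
  linarith
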